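/- Let g(z) = sin z. Then the residual Julia set J_r(g) is not a spider's web. -/

import Mathlib

open Filter Topology Set Bornology

noncomputable section

/-- `f : ℂ → ℂ` is a transcendental entire function: it is differentiable on all of `ℂ`
and is not a polynomial. -/
def TranscendentalEntire (f : ℂ → ℂ) : Prop :=
  Differentiable ℂ f ∧ ¬ ∃ p : Polynomial ℂ, ∀ z, f z = p.eval z

/-- The spherical (chordal) metric on the Riemann sphere `ℂ ∪ {∞}`, realised as `OnePoint ℂ`. -/
noncomputable def sphericalDist : OnePoint ℂ → OnePoint ℂ → ℝ := fun u v =>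
  match u, v with
  | (some z), (some w) => 2 * dist z w / (Real.sqrt (1 + ‖z‖ ^ 2) * Real.sqrt (1 + ‖w‖ ^ 2))
  | (some z), none => 2 / Real.sqrt (1 + ‖z‖ ^ 2)
  | none, (some w) => 2 / Real.sqrt (1 + ‖w‖ ^ 2)
  | none, none => 0

/-- The Fatou set of `f`: the set of points `z` having a neighbourhood `U` on which the
family of iterates of `f` is normal, i.e. every sequence of iterates has a subsequence
converging uniformly on every compact subset of `U` (hence locally uniformly on `U`)
with respect to the spherical metric on the Riemann sphere `ℂ ∪ {∞}`. -/
def FatouSet (f : ℂ → ℂ) : Set ℂ :=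
  {z | ∃ U ∈ 𝓝 z, ∀ s : ℕ → ℕ, StrictMono s → ∃ t : ℕ → ℕ, StrictMono t ∧
    ∃ g : ℂ → OnePoint ℂ, ∀ K ⊆ U, IsCompact K → ∀ ε > 0, ∀ᶠ k in atTop,
      ∀ w ∈ K, sphericalDist (f^[s (t k)] w : ℂ) (g w) < ε}

/-- The Julia set of `f` is the complement of the Fatou set. -/
def JuliaSet (f : ℂ → ℂ) : Set ℂ := (FatouSet f)ᶜ

/-- `U` is a Fatou component of `f`: a connected component of the Fatou set. -/
def IsFatouComponent (f : ℂ → ℂ) (U : Set ℂ) : Prop :=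
  ∃ z ∈ FatouSet f, U = connectedComponentIn (FatouSet f) z

/-- A set `E ⊆ ℂ` is a spider's web if it is connected and there is a sequence of bounded,
simply connected domains `G k` with `G k ⊆ G (k+1)`, `∂(G k) ⊆ E`, and `⋃ k, G k = ℂ`. -/
def SpidersWeb (E : Set ℂ) : Prop :=
  IsConnected E ∧ ∃ G : ℕ → Set ℂ,
    (∀ k, IsOpen (G k) ∧ IsConnected (G k) ∧ IsBounded (G k) ∧ SimplyConnectedSpace (G k)) ∧
    (∀ k, G k ⊆ G (k + 1)) ∧ (∀ k, frontier (G k) ⊆ E) ∧ (⋃ k, G k) = univ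

/-- `X` is locally connected at `z`: every neighbourhood of `z` in the subspace `X`
contains a connected (not necessarily open) neighbourhood of `z` in `X`. -/
def LocallyConnectedAt (X : Set ℂ) (z : ℂ) : Prop :=
  ∀ V ∈ 𝓝[X] z, ∃ W ∈ 𝓝[X] z, W ⊆ V ∧ W ⊆ X ∧ IsConnected W

/-- `z` is a buried point of `f`: it lies in the Julia set but not on the boundary of
any Fatou component. -/
def BuriedPoint (f : ℂ → ℂ) (z : ℂ) : Prop :=
  z ∈ JuliaSet f ∧ ∀ U : Set ℂ, IsFatouComponent f U → z ∉ frontier U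

/-- The residual Julia set: the set of buried points. -/
def ResidualJuliaSet (f : ℂ → ℂ) : Set ℂ := {z | BuriedPoint f z}

/-- A set `S ⊆ ℂ` surrounds a point `z` if `z` lies in a bounded connected component of
the complement of `S`. -/
def Surrounds (S : Set ℂ) (z : ℂ) : Prop :=
  z ∈ Sᶜ ∧ IsBounded (connectedComponentIn Sᶜ z)

/-- A Jordan curve: a subset of `ℂ` homeomorphic to a circle. -/
def IsJordanCurve (C : Set ℂ) : Prop :=
  Nonempty (C ≃ₜ Metric.sphere (0 : ℂ) 1)

/-- The spherical diameter of a subset of `ℂ`, with respect to the chordal metric on the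
Riemann sphere. -/
noncomputable def sphericalDiam (S : Set ℂ) : ℝ :=
  sSup ((fun p : ℂ × ℂ => sphericalDist (p.1 : OnePoint ℂ) (p.2 : OnePoint ℂ)) '' (S ×ˢ S))


lemma sinre (z : ℂ) : (Complex.sin z).re = Real.sin z.re * Real.cosh z.im := by
  rw [Complex.sin_eq]
  simp [← Complex.ofReal_sin, ← Complex.ofReal_cos, ← Complex.ofReal_sinh, ← Complex.ofReal_cosh]

lemma sinim (z : ℂ) : (Complex.sin z).im = Real.cos z.re * Real.sinh z.im := by
  rw [Complex.sin_eq]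
  simp [← Complex.ofReal_sin, ← Complex.ofReal_cos, ← Complex.ofReal_sinh, ← Complex.ofReal_cosh]

-- I2
lemma I2 {t : ℝ} (ht : 0 ≤ t) : Real.sinh t ≤ t * Real.cosh t := by
  have mono : MonotoneOn (fun t : ℝ => t * Real.cosh t - Real.sinh t) (Set.Ici 0) := by
    apply monotoneOn_of_deriv_nonneg (convex_Ici 0)
    · fun_prop
    · intro x hx
      exact ((differentiableAt_id.mul Real.differentiable_cosh.differentiableAt).sub
        Real.differentiable_sinh.differentiableAt).differentiableWithinAt
    · intro x hx
      have h : HasDerivAt (fun t : ℝ => t * Real.cosh t - Real.sinh t)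
          ((1 * Real.cosh x + x * Real.sinh x) - Real.cosh x) x :=
        ((hasDerivAt_id x).mul (Real.hasDerivAt_cosh x)).sub (Real.hasDerivAt_sinh x)
      rw [h.deriv]
      have hx' : (0:ℝ) ≤ x := le_of_lt (by simpa using hx)
      nlinarith [Real.sinh_nonneg_iff.2 hx']
  have := mono (self_mem_Ici (a := (0:ℝ))) ht ht
  simp only [Real.cosh_zero, Real.sinh_zero, mul_one, zero_mul, sub_zero] at this
  linarith [this]

-- I1
lemma I1 {x : ℝ} (h0 : 0 ≤ x) (h1 : x ≤ 3/2) : x * Real.cos x ≤ Real.sin x := by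
  have hpi : (3/2 : ℝ)  ≤ Real.pi := by linarith [Real.pi_gt_three]
  have mono : MonotoneOn (fun t : ℝ => Real.sin t - t * Real.cos t) (Set.Icc 0 (3/2)) := by
    apply monotoneOn_of_deriv_nonneg (convex_Icc 0 (3/2))
    · fun_prop
    · intro t ht
      exact (Real.differentiable_sin.differentiableAt.sub
        (differentiableAt_id.mul Real.differentiable_cos.differentiableAt)).differentiableWithinAt
    · intro t ht
      rw [interior_Icc] at ht
      have h : HasDerivAt (fun t : ℝ => Real.sin t - t * Real.cos t)
          (Real.cos t - (1 * Real.cos t + t * (-Real.sin t))) t :=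
        (Real.hasDerivAt_sin t).sub ((hasDerivAt_id t).mul (Real.hasDerivAt_cos t))
      rw [h.deriv]
      have hs : 0 ≤ Real.sin t := Real.sin_nonneg_of_nonneg_of_le_pi (le_of_lt ht.1)
        (by linarith [ht.2])
      nlinarith [ht.1]
  have := mono (Set.mem_Icc.2 ⟨le_refl 0, by norm_num⟩) (Set.mem_Icc.2 ⟨h0, h1⟩) h0
  simp only [Real.sin_zero, Real.cos_zero, mul_one, zero_mul, sub_zero] at this
  linarith

-- I3 strict:  sin x * cosh (x/4) < x  for x ∈ (0, 3/2]
lemma I3 {x : ℝ} (h0 : 0 < x) (h1 : x ≤ 3/2) : Real.sin x * Real.cosh (x/4) < x := by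
  -- h(t) = t - sin t * cosh (t/4), h 0 = 0, h' 0 = 0, h'' > 0 on (0,3/2)
  set f : ℝ → ℝ := fun t => 1 - (Real.cos t * Real.cosh (t/4) + Real.sin t * (Real.sinh (t/4) * (4⁻¹))) with hf
  have hcosh4 : ∀ t : ℝ, HasDerivAt (fun u : ℝ => Real.cosh (u/4)) (Real.sinh (t/4) * (4⁻¹)) t := by
    intro t
    simpa [Function.comp_def] using (Real.hasDerivAt_cosh (t/4)).comp t ((hasDerivAt_id t).div_const 4)
  have hsinh4 : ∀ t : ℝ, HasDerivAt (fun u : ℝ => Real.sinh (u/4)) (Real.cosh (t/4) * (4⁻¹)) t := by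
    intro t
    simpa [Function.comp_def] using (Real.hasDerivAt_sinh (t/4)).comp t ((hasDerivAt_id t).div_const 4)
  have hder : ∀ t : ℝ, HasDerivAt (fun u : ℝ => u - Real.sin u * Real.cosh (u/4)) (f t) t := by
    intro t
    simpa [hf, Pi.sub_def, Pi.mul_def] using (hasDerivAt_id t).sub ((Real.hasDerivAt_sin t).mul (hcosh4 t))
  have hderf : ∀ t : ℝ, HasDerivAt f
      (-((-Real.sin t) * Real.cosh (t/4) + Real.cos t * (Real.sinh (t/4) * 4⁻¹)
        + ((Real.cos t * (Real.sinh (t/4) * 4⁻¹)) + Real.sin t * (Real.cosh (t/4) * 4⁻¹ * 4⁻¹)))) t := by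
    intro t
    have h1 : HasDerivAt (fun u : ℝ => Real.cos u * Real.cosh (u/4))
        ((-Real.sin t) * Real.cosh (t/4) + Real.cos t * (Real.sinh (t/4) * 4⁻¹)) t :=
      (Real.hasDerivAt_cos t).mul (hcosh4 t)
    have h2 : HasDerivAt (fun u : ℝ => Real.sin u * (Real.sinh (u/4) * 4⁻¹))
        ((Real.cos t) * (Real.sinh (t/4) * 4⁻¹) + Real.sin t * (Real.cosh (t/4) * 4⁻¹ * 4⁻¹)) t := by
      have := (Real.hasDerivAt_sin t).mul ((hsinh4 t).mul_const (4⁻¹))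
      simpa [Pi.mul_def, mul_comm, mul_assoc, mul_left_comm] using this
    simpa [hf, Pi.sub_def, Pi.add_def] using (hasDerivAt_const t (1:ℝ)).sub (h1.add h2)
  -- f is nonneg... prove f strictly positive on (0, 3/2):  f monotone with f 0 = 0
  have hf0 : f 0 = 0 := by simp [hf]
  have monof : StrictMonoOn f (Set.Icc 0 (3/2)) := by
    apply strictMonoOn_of_deriv_pos (convex_Icc 0 (3/2))
    · fun_prop
    · intro t ht
      rw [interior_Icc] at ht
      rw [(hderf t).deriv]
      -- need: sin t cosh(t/4) * (1 - 1/16) ≥ 2 * (1/4) cos t sinh(t/4)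
      have hpi : (3/2 : ℝ)  ≤ Real.pi := by linarith [Real.pi_gt_three]
      have ht0 : (0:ℝ) < t := ht.1
      have hsin : 0 < Real.sin t := Real.sin_pos_of_pos_of_lt_pi ht0 (by linarith [ht.2])
      have hcos : 0 ≤ Real.cos t := Real.cos_nonneg_of_mem_Icc
        ⟨by linarith, by linarith [Real.pi_gt_three, ht.2]⟩
      have hch : (1:ℝ) ≤ Real.cosh (t/4) := Real.one_le_cosh _
      have hsh : Real.sinh (t/4) ≤ (t/4) * Real.cosh (t/4) := I2 (by linarith)
      have hsh0 : 0 ≤ Real.sinh (t/4) := Real.sinh_nonneg_iff.2 (by linarith)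
      have hI1 : t * Real.cos t ≤ Real.sin t := I1 ht0.le ht.2.le
      nlinarith [mul_le_mul_of_nonneg_left hsh hcos, mul_nonneg hsin.le (le_trans zero_le_one hch), mul_pos hsin (lt_of_lt_of_le zero_lt_one hch)]
  have hfpos : ∀ t ∈ Set.Ioc (0:ℝ) (3/2), 0 < f t := by
    intro t ht
    have := monof (Set.mem_Icc.2 ⟨le_refl 0, by norm_num⟩) (Set.mem_Icc.2 ⟨ht.1.le, ht.2⟩) ht.1
    rwa [hf0] at this
  have monoh : StrictMonoOn (fun u : ℝ => u - Real.sin u * Real.cosh (u/4)) (Set.Icc 0 (3/2)) := by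
    apply strictMonoOn_of_deriv_pos (convex_Icc 0 (3/2))
    · fun_prop
    · intro t ht
      rw [interior_Icc] at ht
      rw [(hder t).deriv]
      exact hfpos t ⟨ht.1, ht.2.le⟩
  have := monoh (Set.mem_Icc.2 ⟨le_refl 0, by norm_num⟩) (Set.mem_Icc.2 ⟨h0.le, h1⟩) h0
  simp only [Real.sin_zero, Real.cosh_zero, zero_mul, sub_zero] at this
  linarith

-- nonstrict version of I3
lemma I3' {x : ℝ} (h0 : 0 ≤ x) (h1 : x ≤ 3/2) : Real.sin x * Real.cosh (x/4) ≤ x := by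
  rcases eq_or_lt_of_le h0 with h | h
  · simp [← h]
  · exact (I3 h h1).le

lemma psi_mono {x₁ x₂ : ℝ} (h0 : 0 ≤ x₁) (h12 : x₁ ≤ x₂) (h2 : x₂ ≤ 3/2) :
    Real.sin x₁ * Real.cosh (x₁/4) ≤ Real.sin x₂ * Real.cosh (x₂/4) := by
  have hpi2 : (3/2 : ℝ) ≤ Real.pi / 2 := by linarith [Real.pi_gt_three]
  have hs : Real.sin x₁ ≤ Real.sin x₂ := by
    rcases eq_or_lt_of_le h12 with h | h
    · rw [h]
    · exact (Real.strictMonoOn_sin ⟨by linarith [Real.pi_pos], by linarith⟩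
        ⟨by linarith [Real.pi_pos], by linarith⟩ h).le
  have hc : Real.cosh (x₁/4) ≤ Real.cosh (x₂/4) := by
    rw [Real.cosh_le_cosh]
    rw [abs_of_nonneg (by linarith), abs_of_nonneg (by linarith)]
    linarith
  have hs1 : 0 ≤ Real.sin x₁ := Real.sin_nonneg_of_nonneg_of_le_pi h0
    (by linarith [Real.pi_gt_three])
  exact mul_le_mul hs hc (le_trans (by norm_num) (Real.one_le_cosh _)) (by linarith)

/-- the closed petal -/
def InPetal (z : ℂ) : Prop := 0 ≤ z.re ∧ z.re ≤ 3/2 ∧ |z.im| ≤ z.re/4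

lemma petal_step {z : ℂ} (h : InPetal z) :
    InPetal (Complex.sin z) ∧ (Complex.sin z).re ≤ Real.sin z.re * Real.cosh (z.re/4) := by
  obtain ⟨h0, h1, h2⟩ := h
  set x := z.re; set y := z.im
  have hsx : 0 ≤ Real.sin x := Real.sin_nonneg_of_nonneg_of_le_pi h0
    (by linarith [Real.pi_gt_three])
  have hcx : 0 ≤ Real.cos x := Real.cos_nonneg_of_mem_Icc
    ⟨by linarith [Real.pi_gt_three], by linarith [Real.pi_gt_three]⟩
  have hcy1 : (1:ℝ) ≤ Real.cosh y := Real.one_le_cosh y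
  have hcyle : Real.cosh y ≤ Real.cosh (x/4) := by
    rw [Real.cosh_le_cosh, abs_of_nonneg (by linarith : (0:ℝ) ≤ x/4)]
    exact h2
  have hre : (Complex.sin z).re = Real.sin x * Real.cosh y := sinre z
  have him : (Complex.sin z).im = Real.cos x * Real.sinh y := sinim z
  have hre_le : (Complex.sin z).re ≤ Real.sin x * Real.cosh (x/4) := by
    rw [hre]; exact mul_le_mul_of_nonneg_left hcyle hsx
  refine ⟨⟨?_, ?_, ?_⟩, hre_le⟩
  · rw [hre]; exact mul_nonneg hsx (by linarith)
  · exact le_trans hre_le (le_trans (I3' h0 h1) h1)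
  · -- |cos x * sinh y| ≤ (sin x * cosh y)/4
    rw [him, hre, abs_mul, abs_of_nonneg hcx, Real.abs_sinh]
    have h3 : Real.sinh |y| ≤ |y| * Real.cosh |y| := I2 (abs_nonneg y)
    have h4 : Real.cosh |y| = Real.cosh y := Real.cosh_abs y
    have h5 : Real.sinh |y| ≤ (x/4) * Real.cosh y := by
      rw [h4] at h3
      calc Real.sinh |y| ≤ |y| * Real.cosh y := h3
        _ ≤ (x/4) * Real.cosh y := by
            apply mul_le_mul_of_nonneg_right h2 (by linarith)
    have h6 : x * Real.cos x ≤ Real.sin x := I1 h0 h1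
    calc Real.cos x * Real.sinh |y| ≤ Real.cos x * ((x/4) * Real.cosh y) := by
          apply mul_le_mul_of_nonneg_left h5 hcx
      _ = (x * Real.cos x) * Real.cosh y / 4 := by ring
      _ ≤ Real.sin x * Real.cosh y / 4 := by
          apply div_le_div_of_nonneg_right ?_ (by norm_num)
          exact mul_le_mul_of_nonneg_right h6 (by linarith)

/-- upper bound sequence for petal orbits -/
noncomputable def aSeq : ℕ → ℝ
  | 0 => 3/2
  | n+1 => Real.sin (aSeq n) * Real.cosh (aSeq n / 4)

lemma aSeq_mem : ∀ n, 0 ≤ aSeq n ∧ aSeq n ≤ 3/2 := by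
  intro n
  induction n with
  | zero => norm_num [aSeq]
  | succ n ih =>
    obtain ⟨h0, h1⟩ := ih
    constructor
    · apply mul_nonneg (Real.sin_nonneg_of_nonneg_of_le_pi h0 (by linarith [Real.pi_gt_three]))
      linarith [Real.one_le_cosh (aSeq n / 4)]
    · exact le_trans (I3' h0 h1) h1

lemma aSeq_antitone : Antitone aSeq := by
  apply antitone_nat_of_succ_le
  intro n
  exact I3' (aSeq_mem n).1 (aSeq_mem n).2

lemma aSeq_tendsto : Filter.Tendsto aSeq Filter.atTop (nhds 0) := by
  have hbdd : BddBelow (Set.range aSeq) := ⟨0, fun x ⟨n, hn⟩ => hn ▸ (aSeq_mem n).1⟩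
  have htd := tendsto_atTop_ciInf aSeq_antitone hbdd
  set L := ⨅ n, aSeq n with hL
  have hL0 : 0 ≤ L := le_ciInf fun n => (aSeq_mem n).1
  have hL32 : L ≤ 3/2 := le_trans (ciInf_le hbdd 0) (by norm_num [aSeq])
  -- L is a fixed point of psi
  have h1 : Filter.Tendsto (fun n => aSeq (n+1)) Filter.atTop (nhds L) :=
    htd.comp (Filter.tendsto_add_atTop_nat 1)
  have h2 : Filter.Tendsto (fun n => Real.sin (aSeq n) * Real.cosh (aSeq n / 4))
      Filter.atTop (nhds (Real.sin L * Real.cosh (L/4))) := by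
    apply Filter.Tendsto.mul
    · exact (Real.continuous_sin.continuousAt).tendsto.comp htd
    · exact (Real.continuous_cosh.continuousAt).tendsto.comp (htd.div_const 4)
  have heq : (fun n => aSeq (n+1)) = fun n => Real.sin (aSeq n) * Real.cosh (aSeq n / 4) := rfl
  rw [heq] at h1
  have hfix : Real.sin L * Real.cosh (L/4) = L := tendsto_nhds_unique h2 h1
  rcases eq_or_lt_of_le hL0 with h | h
  · rwa [← h] at htd
  · exact absurd hfix (ne_of_lt (I3 h hL32))

lemma petal_orbit {z : ℂ} (h : InPetal z) :
    ∀ n, InPetal (Complex.sin^[n] z) ∧ (Complex.sin^[n] z).re ≤ aSeq n := by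
  intro n
  induction n with
  | zero => exact ⟨h, by simpa [aSeq] using h.2.1⟩
  | succ n ih =>
    obtain ⟨hp, hb⟩ := ih
    rw [Function.iterate_succ_apply']
    refine ⟨(petal_step hp).1, ?_⟩
    calc (Complex.sin (Complex.sin^[n] z)).re
        ≤ Real.sin (Complex.sin^[n] z).re * Real.cosh ((Complex.sin^[n] z).re / 4) :=
          (petal_step hp).2
      _ ≤ Real.sin (aSeq n) * Real.cosh (aSeq n / 4) :=
          psi_mono hp.1 hb (aSeq_mem n).2
      _ = aSeq (n+1) := rfl

lemma sin_iterate_neg (n : ℕ) (z : ℂ) : Complex.sin^[n] (-z) = -(Complex.sin^[n] z) := by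
  induction n with
  | zero => simp
  | succ n ih => rw [Function.iterate_succ_apply', Function.iterate_succ_apply', ih,
      Complex.sin_neg]

lemma petal_norm_bound {z : ℂ} (h : InPetal z ∨ InPetal (-z)) (n : ℕ) :
    ‖Complex.sin^[n] z‖ ≤ 2 * aSeq n := by
  have key : ∀ w : ℂ, InPetal w → ‖Complex.sin^[n] w‖ ≤ 2 * aSeq n := by
    intro w hw
    obtain ⟨hp, hb⟩ := petal_orbit hw n
    have h1 : |(Complex.sin^[n] w).re| ≤ aSeq n := by
      rw [abs_of_nonneg hp.1]; exact hb
    have h2 : |(Complex.sin^[n] w).im| ≤ aSeq n := by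
      refine le_trans hp.2.2 ?_
      linarith [hp.1, le_trans (abs_of_nonneg hp.1).symm.le h1]
    calc ‖Complex.sin^[n] w‖ = ‖Complex.sin^[n] w‖ := rfl
      _ ≤ |(Complex.sin^[n] w).re| + |(Complex.sin^[n] w).im| :=
          Complex.norm_le_abs_re_add_abs_im _
      _ ≤ 2 * aSeq n := by linarith
  rcases h with h | h
  · exact key z h
  · have := key (-z) h
    rwa [sin_iterate_neg, norm_neg] at this


lemma sphericalDist_le_two_norm (v : ℂ) : sphericalDist (v : OnePoint ℂ) ((0:ℂ) : OnePoint ℂ) ≤ 2 * ‖v‖ := by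
  have h : sphericalDist (v : OnePoint ℂ) ((0:ℂ) : OnePoint ℂ)
      = 2 * dist v 0 / (Real.sqrt (1 + ‖v‖ ^ 2) * Real.sqrt (1 + ‖(0:ℂ)‖ ^ 2)) := rfl
  rw [h]
  have h1 : Real.sqrt (1 + ‖(0:ℂ)‖ ^ 2) = 1 := by norm_num
  have h2 : (1:ℝ) ≤ Real.sqrt (1 + ‖v‖ ^ 2) := by
    have := Real.sqrt_le_sqrt (show (1:ℝ) ≤ 1 + ‖v‖ ^ 2 by nlinarith [sq_nonneg ‖v‖])
    rwa [Real.sqrt_one] at this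
  rw [h1, mul_one, dist_zero_right]
  rw [div_le_iff₀ (by linarith)]
  nlinarith [norm_nonneg v]

/-- the open symmetric petal -/
def petalO : Set ℂ := {z : ℂ | |z.re| < 3/2 ∧ |z.im| < |z.re|/4}

lemma petalO_open : IsOpen petalO := by
  have h1 : IsOpen {z : ℂ | |z.re| < 3/2} :=
    isOpen_lt (by fun_prop) continuous_const
  have h2 : IsOpen {z : ℂ | |z.im| < |z.re|/4} :=
    isOpen_lt (by fun_prop) (by fun_prop)
  exact h1.inter h2

lemma petalO_mem_petal {z : ℂ} (h : z ∈ petalO) : InPetal z ∨ InPetal (-z) := by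
  obtain ⟨h1, h2⟩ := h
  rcases le_or_gt 0 z.re with hre | hre
  · left
    refine ⟨hre, ?_, ?_⟩
    · rw [abs_of_nonneg hre] at h1; linarith
    · rw [abs_of_nonneg hre] at h2; linarith
  · right
    refine ⟨?_, ?_, ?_⟩
    · simp only [Complex.neg_re]; linarith
    · simp only [Complex.neg_re]
      rw [abs_of_neg hre] at h1; linarith
    · simp only [Complex.neg_im, Complex.neg_re, abs_neg]
      rw [abs_of_neg hre] at h2; linarith

lemma petalO_subset_fatou : petalO ⊆ FatouSet Complex.sin := by
  intro z₀ hz₀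
  refine ⟨petalO, petalO_open.mem_nhds hz₀, ?_⟩
  intro s hs
  refine ⟨id, strictMono_id, fun _ => ((0:ℂ) : OnePoint ℂ), ?_⟩
  intro K hK _ ε hε
  have h8 : (0:ℝ) < ε/8 := by linarith
  have hev : ∀ᶠ n in atTop, aSeq n < ε/8 := by
    have := aSeq_tendsto.eventually (eventually_lt_nhds h8) -- maybe wrong name
    exact this
  filter_upwards [hev] with k hk w hw
  have hwp : InPetal w ∨ InPetal (-w) := petalO_mem_petal (hK hw)
  have hb : ‖Complex.sin^[s (id k)] w‖ ≤ 2 * aSeq (s (id k)) := petal_norm_bound hwp _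
  have hsk : aSeq (s (id k)) ≤ aSeq k := aSeq_antitone (hs.le_apply)
  calc sphericalDist ((Complex.sin^[s (id k)] w : ℂ) : OnePoint ℂ) ((0:ℂ) : OnePoint ℂ)
      ≤ 2 * ‖Complex.sin^[s (id k)] w‖ := sphericalDist_le_two_norm _
    _ ≤ 2 * (2 * aSeq (s (id k))) := by linarith
    _ < ε := by linarith

lemma fatou_isOpen (f : ℂ → ℂ) : IsOpen (FatouSet f) := by
  rw [isOpen_iff_mem_nhds]
  rintro z ⟨U, hU, hprop⟩
  exact mem_of_superset (interior_mem_nhds.2 hU)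
    (fun w hw => ⟨U, mem_interior_iff_mem_nhds.1 hw, hprop⟩)

lemma sin_preimage_fatou {z : ℂ} (h : Complex.sin z ∈ FatouSet Complex.sin) :
    z ∈ FatouSet Complex.sin := by
  obtain ⟨U, hU, hprop⟩ := h
  refine ⟨Complex.sin ⁻¹' U, Complex.continuous_sin.continuousAt.preimage_mem_nhds hU, ?_⟩
  intro s hs
  have hs1 : ∀ k, 1 ≤ s (k+1) := fun k =>
    Nat.one_le_iff_ne_zero.2 (by
      have : s 0 < s (k+1) := hs (Nat.succ_pos k)
      omega)
  set s₂ : ℕ → ℕ := fun k => s (k+1) - 1 with hs₂def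
  have hs₂ : StrictMono s₂ := by
    intro a b hab
    have h1 : s (a+1) < s (b+1) := hs (by omega)
    have h2 := hs1 a
    simp only [hs₂def]
    omega
  obtain ⟨t₂, ht₂, g₂, hg₂⟩ := hprop s₂ hs₂
  refine ⟨fun k => t₂ k + 1, fun a b hab => Nat.add_lt_add_right (ht₂ hab) 1,
    g₂ ∘ Complex.sin, ?_⟩
  intro K hK hKc ε hε
  have hK' : Complex.sin '' K ⊆ U := by
    rintro _ ⟨w, hw, rfl⟩; exact hK hw
  have hKc' : IsCompact (Complex.sin '' K) := hKc.image Complex.continuous_sin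
  filter_upwards [hg₂ (Complex.sin '' K) hK' hKc' ε hε] with k hk w hw
  have hiter : Complex.sin^[s (t₂ k + 1)] w = Complex.sin^[s₂ (t₂ k)] (Complex.sin w) := by
    rw [hs₂def]
    have h1 : s (t₂ k + 1) = (s (t₂ k + 1) - 1) + 1 := (Nat.succ_pred_eq_of_pos (hs1 _)).symm
    rw [h1, Function.iterate_succ_apply]
  rw [hiter]
  exact hk (Complex.sin w) ⟨w, hw, rfl⟩

lemma real_mem_fatou {u : ℝ} (h : Real.sin u ≠ 0) : ((u:ℂ)) ∈ FatouSet Complex.sin := by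
  apply sin_preimage_fatou
  apply petalO_subset_fatou
  rw [← Complex.ofReal_sin]
  constructor
  · simp only [Complex.ofReal_re]
    calc |Real.sin u| ≤ 1 := Real.abs_sin_le_one u
      _ < 3/2 := by norm_num
  · simp only [Complex.ofReal_im, Complex.ofReal_re, abs_zero]
    have : 0 < |Real.sin u| := abs_pos.2 h
    linarith

/-- The residual Julia set of `sin z` is not a spider's web. -/
theorem residualJulia_sin_not_spidersWeb : ¬ SpidersWeb (ResidualJuliaSet Complex.sin) := by
  rintro ⟨-, G, hG, -, hfr, hunion⟩
  set c : ℝ → ℂ := fun y => (↑(Real.pi/2) : ℂ) + ↑y * Complex.I with hcdef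
  have hccont : Continuous c := by
    apply Continuous.add continuous_const
    exact Complex.continuous_ofReal.mul continuous_const
  have hcim : ∀ y, (c y).im = y := by intro y; simp [hcdef]
  have hsin_c : ∀ y : ℝ, Complex.sin (c y) = ((Real.cosh y : ℝ) : ℂ) := by
    intro y
    have h1 : Complex.sin ↑(Real.pi/2) = 1 := by push_cast; exact Complex.sin_pi_div_two
    have h2 : Complex.cos ↑(Real.pi/2) = 0 := by push_cast; exact Complex.cos_pi_div_two
    rw [hcdef]
    simp only [Complex.sin_add, h1, h2, Complex.cos_mul_I, Complex.ofReal_cosh]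
    ring
  have hline_fatou : ∀ y : ℝ, Real.sin (Real.cosh y) ≠ 0 → c y ∈ FatouSet Complex.sin := by
    intro y hy
    apply sin_preimage_fatou
    rw [hsin_c]
    exact real_mem_fatou hy
  obtain ⟨k₀, hk₀⟩ : ∃ k, c 0 ∈ G k := mem_iUnion.1 (hunion ▸ mem_univ (c 0))
  obtain ⟨hopen, hGconn, hbdd, -⟩ := hG k₀
  obtain ⟨r, hr⟩ : ∃ r, closure (G k₀) ⊆ Metric.closedBall 0 r :=
    hbdd.closure.subset_closedBall 0
  set y₁ : ℝ := |r| + 1 with hy₁def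
  have hy₁0 : 0 ≤ y₁ := by positivity
  have hy₁out : c y₁ ∉ closure (G k₀) := by
    intro hmem
    have h1 := hr hmem
    rw [Metric.mem_closedBall, dist_zero_right] at h1
    have h2 : |(c y₁).im| ≤ ‖c y₁‖ := Complex.abs_im_le_norm _
    rw [hcim] at h2
    rw [abs_of_nonneg hy₁0] at h2
    have := le_trans h2 h1
    have := le_abs_self r
    linarith [le_trans h2 h1, le_abs_self r]
  set Sset : Set ℝ := Set.Icc 0 y₁ ∩ c ⁻¹' closure (G k₀) with hSsetdef
  have hSclosed : IsClosed Sset := isClosed_Icc.inter (isClosed_closure.preimage hccont)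
  have hSne : Sset.Nonempty := ⟨0, ⟨le_refl 0, hy₁0⟩, subset_closure hk₀⟩
  have hSbdd : BddAbove Sset := ⟨y₁, fun y hy => hy.1.2⟩
  set y₀ := sSup Sset with hy₀def
  have hy₀mem : y₀ ∈ Sset := hSclosed.csSup_mem hSne hSbdd
  have hy₀cl : c y₀ ∈ closure (G k₀) := hy₀mem.2
  have hy₀0 : 0 ≤ y₀ := hy₀mem.1.1
  have hy₀lt : y₀ < y₁ := lt_of_le_of_ne hy₀mem.1.2 (fun h => hy₁out (h ▸ hy₀cl))
  have hy₀notG : c y₀ ∉ G k₀ := by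
    intro hmem
    obtain ⟨ε, hεpos, hball⟩ := Metric.isOpen_iff.1 (hopen.preimage hccont) y₀ hmem
    set y' := min (y₀ + ε/2) y₁ with hy'def
    have hy'gt : y₀ < y' := lt_min (by linarith) hy₀lt
    have hy'S : y' ∈ Sset := by
      refine ⟨⟨by linarith, min_le_right _ _⟩, subset_closure ?_⟩
      apply hball
      rw [Metric.mem_ball, Real.dist_eq, abs_of_nonneg (by linarith : (0:ℝ) ≤ y' - y₀)]
      have := min_le_left (y₀ + ε/2) y₁
      simp only [hy'def] at *
      linarith
    exact absurd (le_csSup hSbdd hy'S) (not_le.2 hy'gt)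
  have hfront : c y₀ ∈ frontier (G k₀) := by
    rw [hopen.frontier_eq]
    exact ⟨hy₀cl, hy₀notG⟩
  have hbur : BuriedPoint Complex.sin (c y₀) := hfr k₀ hfront
  have hJ : c y₀ ∉ FatouSet Complex.sin := hbur.1
  by_cases hcase : Real.sin (Real.cosh y₀) = 0
  · -- cosh y₀ = mπ
    obtain ⟨m, hm⟩ := Real.sin_eq_zero_iff.1 hcase
    have hch1 : (1:ℝ) ≤ Real.cosh y₀ := Real.one_le_cosh y₀
    have hmpos : (0:ℝ) < (m:ℝ) := by nlinarith [Real.pi_pos]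
    have hmZ : (0:ℤ) < m := by exact_mod_cast hmpos
    have hm1 : (1:ℝ) ≤ (m:ℝ) := by exact_mod_cast hmZ
    have hy₀pos : 0 < y₀ := by
      rcases eq_or_lt_of_le hy₀0 with h | h
      · exfalso
        rw [← h, Real.cosh_zero] at hm
        nlinarith [Real.pi_gt_three]
      · exact h
    obtain ⟨δ₁, hδ₁pos, hδ₁⟩ := Metric.continuousAt_iff.1 (Real.continuous_cosh.continuousAt (x := y₀)) 1 one_pos
    set δ := min δ₁ y₀ with hδdef
    have hδpos : 0 < δ := lt_min hδ₁pos hy₀pos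
    have hδy₀ : δ ≤ y₀ := min_le_right _ _
    have hδδ₁ : δ ≤ δ₁ := min_le_left _ _
    have hseg : ∀ y ∈ Set.Ioo (y₀ - δ) y₀, c y ∈ FatouSet Complex.sin := by
      intro y hy
      apply hline_fatou
      have hy0 : 0 ≤ y := by linarith [hy.1]
      have hlt : Real.cosh y < (m:ℝ) * Real.pi := by
        have h1 : Real.cosh y < Real.cosh y₀ :=
          Real.cosh_lt_cosh.2 (by rw [abs_of_nonneg hy0, abs_of_nonneg hy₀0]; exact hy.2)
        linarith [hm ▸ h1]
      have hgt : (m:ℝ) * Real.pi - 1 < Real.cosh y := by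
        have hd : dist y y₀ < δ₁ := by
          rw [Real.dist_eq, abs_of_nonpos (by linarith [hy.2] : y - y₀ ≤ 0)]
          linarith [hy.1]
        have h2 := hδ₁ hd
        rw [Real.dist_eq] at h2
        have h3 := (abs_lt.1 h2).1
        rw [← hm] at h3
        linarith
      intro hzero
      obtain ⟨j, hj⟩ := Real.sin_eq_zero_iff.1 hzero
      have hjm : j < m := by
        have h4 : (j:ℝ) * Real.pi < (m:ℝ) * Real.pi := by rw [hj]; exact hlt
        have h5 : (j:ℝ) < (m:ℝ) := lt_of_mul_lt_mul_right h4 Real.pi_pos.le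
        exact_mod_cast h5
      have hjm1 : (j:ℝ) ≤ (m:ℝ) - 1 := by
        have : j ≤ m - 1 := by omega
        have h6 : (j:ℝ) ≤ ((m - 1 : ℤ) : ℝ) := by exact_mod_cast this
        push_cast at h6
        linarith
      have h7 : (j:ℝ) * Real.pi ≤ ((m:ℝ) - 1) * Real.pi :=
        mul_le_mul_of_nonneg_right hjm1 Real.pi_pos.le
      rw [hj] at h7
      nlinarith [Real.pi_gt_three]
    set s₀ := c (y₀ - δ/2) with hs₀def
    have hs₀mem : s₀ ∈ FatouSet Complex.sin := hseg _ ⟨by linarith, by linarith⟩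
    have hUcomp : IsFatouComponent Complex.sin
        (connectedComponentIn (FatouSet Complex.sin) s₀) := ⟨s₀, hs₀mem, rfl⟩
    have hSsub : c '' Set.Ioo (y₀ - δ) y₀ ⊆ connectedComponentIn (FatouSet Complex.sin) s₀ := by
      apply IsPreconnected.subset_connectedComponentIn
      · exact isPreconnected_Ioo.image c hccont.continuousOn
      · exact ⟨y₀ - δ/2, ⟨by linarith, by linarith⟩, rfl⟩
      · rintro _ ⟨y, hy, rfl⟩
        exact hseg y hy
    have hclos : c y₀ ∈ closure (c '' Set.Ioo (y₀ - δ) y₀) := by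
      apply image_closure_subset_closure_image hccont
      refine ⟨y₀, ?_, rfl⟩
      rw [closure_Ioo (by linarith : y₀ - δ ≠ y₀)]
      exact ⟨by linarith, le_refl _⟩
    have hUopen : IsOpen (connectedComponentIn (FatouSet Complex.sin) s₀) :=
      (fatou_isOpen _).connectedComponentIn
    have hfrontU : c y₀ ∈ frontier (connectedComponentIn (FatouSet Complex.sin) s₀) := by
      rw [hUopen.frontier_eq]
      exact ⟨closure_mono hSsub hclos,
        fun h => hJ (connectedComponentIn_subset _ _ h)⟩
    exact hbur.2 _ hUcomp hfrontU
  · exact hJ (hline_fatou y₀ hcase)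

end
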